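/- For any λ* ∈ ℝ^N and any ε > 0, AdaBoost.S achieves loss at most L(λ*) + ε within 3·‖λ*‖₁²/ε rounds; that is, for every integer t ≥ 3·‖λ*‖₁²/ε one has L(λ^t) ≤ L(λ*) + ε. -/

import Mathlib

/-- The exponential loss `L(λ) = (1/m) ∑ᵢ exp(−(Mλ)ᵢ)`. -/
noncomputable def expLoss {m N : ℕ} (M : Matrix (Fin m) (Fin N) ℝ) (lam : Fin N → ℝ) : ℝ :=
  (1 / (m : ℝ)) * ∑ i, Real.exp (-(M.mulVec lam i))

/-- AdaBoost's distribution `D(i) ∝ exp(−(Mλ)ᵢ)`. -/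
noncomputable def wt {m N : ℕ} (M : Matrix (Fin m) (Fin N) ℝ) (lam : Fin N → ℝ) (i : Fin m) : ℝ :=
  Real.exp (-(M.mulVec lam i)) / ∑ i', Real.exp (-(M.mulVec lam i'))

/-- The ℓ₁-norm on `ℝ^N`. -/
noncomputable def l1 {N : ℕ} (v : Fin N → ℝ) : ℝ := ∑ j, |v j|


/-- `lam`, `j`, `r`, `s` describe a run of AdaBoost.S on feature matrix `M`:
`lam 0 = 0`; at each round the coordinate `j t` of maximal absolute correlation is chosen,
`r t` is its correlation, the step is `α_t = ½ ln((1+r_t)/(1−r_t))` giving the intermediate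
combination `λ̃ = λ^{t} + α·e_{j t}`, and then `λ^{t+1} = s_t·λ̃` where
`s_t ∈ argmin_{s ∈ [0,1]} L(s·λ̃)`. -/
def IsAdaBoostS {m N : ℕ} (M : Matrix (Fin m) (Fin N) ℝ)
    (lam : ℕ → Fin N → ℝ) (j : ℕ → Fin N) (r : ℕ → ℝ) (s : ℕ → ℝ) : Prop :=
  lam 0 = 0 ∧
  ∀ t : ℕ,
    (∀ j' : Fin N, |∑ i, wt M (lam t) i * M i j'| ≤ |∑ i, wt M (lam t) i * M i (j t)|) ∧
    r t = ∑ i, wt M (lam t) i * M i (j t) ∧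
    s t ∈ Set.Icc (0 : ℝ) 1 ∧
    (∀ s' ∈ Set.Icc (0 : ℝ) 1,
      expLoss M (s t • (lam t + Pi.single (j t) ((1 / 2) * Real.log ((1 + r t) / (1 - r t))))) ≤
      expLoss M (s' • (lam t + Pi.single (j t) ((1 / 2) * Real.log ((1 + r t) / (1 - r t)))))) ∧
    lam (t + 1) = s t • (lam t + Pi.single (j t) ((1 / 2) * Real.log ((1 + r t) / (1 - r t))))

section AdaAux

variable {m N : ℕ}

private lemma adaAux_Zpos (hm : 0 < m) (M : Matrix (Fin m) (Fin N) ℝ) (v : Fin N → ℝ) :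
    0 < ∑ i, Real.exp (-(M.mulVec v i)) := by
  haveI : Nonempty (Fin m) := Fin.pos_iff_nonempty.mp hm
  exact Finset.sum_pos (fun i _ => Real.exp_pos _) Finset.univ_nonempty

private lemma adaAux_cast (hm : 0 < m) (M : Matrix (Fin m) (Fin N) ℝ) (v : Fin N → ℝ) :
    (m : ℝ) * expLoss M v = ∑ i, Real.exp (-(M.mulVec v i)) := by
  have hm' : (m : ℝ) ≠ 0 := by positivity
  rw [expLoss]; field_simp

private lemma adaAux_expLoss_pos (hm : 0 < m) (M : Matrix (Fin m) (Fin N) ℝ) (v : Fin N → ℝ) :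
    0 < expLoss M v := by
  have h := adaAux_Zpos hm M v
  have hm' : (0:ℝ) < (m : ℝ) := by exact_mod_cast hm
  rw [expLoss]; positivity

private lemma adaAux_expLoss_zero (hm : 0 < m) (M : Matrix (Fin m) (Fin N) ℝ) :
    expLoss M (0 : Fin N → ℝ) = 1 := by
  have hm' : (m : ℝ) ≠ 0 := by positivity
  simp [expLoss, Matrix.mulVec_zero]
  field_simp

/-- Convexity bound: `∑ e^{-b*} ≥ ∑ e^{-b} + ∑ e^{-b}(b - b*)`. -/
private lemma adaAux_conv (M : Matrix (Fin m) (Fin N) ℝ) (v w : Fin N → ℝ) :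
    ∑ i, Real.exp (-(M.mulVec v i)) +
      ∑ i, Real.exp (-(M.mulVec v i)) * (M.mulVec v i - M.mulVec w i) ≤
      ∑ i, Real.exp (-(M.mulVec w i)) := by
  rw [← Finset.sum_add_distrib]
  apply Finset.sum_le_sum
  intro i _
  have key : Real.exp (-(M.mulVec w i)) =
      Real.exp (-(M.mulVec v i)) * Real.exp (M.mulVec v i - M.mulVec w i) := by
    rw [← Real.exp_add]; congr 1; ring
  have h := Real.add_one_le_exp (M.mulVec v i - M.mulVec w i)
  have hp := (Real.exp_pos (-(M.mulVec v i))).le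
  rw [key]
  nlinarith

/-- The scaling minimality implies `∑ e^{-(Mλ)_i} (Mλ)_i ≥ 0` for `λ = s • v`. -/
private lemma adaAux_scale (hm : 0 < m) (M : Matrix (Fin m) (Fin N) ℝ)
    (v : Fin N → ℝ) (s : ℝ) (hs : s ∈ Set.Icc (0:ℝ) 1)
    (hmin : ∀ s' ∈ Set.Icc (0:ℝ) 1, expLoss M (s • v) ≤ expLoss M (s' • v)) :
    0 ≤ ∑ i, Real.exp (-(M.mulVec (s • v) i)) * M.mulVec (s • v) i := by
  classical
  have hm' : (0:ℝ) < (m : ℝ) := by exact_mod_cast hm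
  set a : Fin m → ℝ := M.mulVec v with ha
  have hmv : ∀ u : ℝ, M.mulVec (u • v) = fun i => u * a i := by
    intro u
    rw [Matrix.mulVec_smul]
    rfl
  have hgl : ∀ u : ℝ, expLoss M (u • v) = (1 / (m : ℝ)) * ∑ i, Real.exp (-(u * a i)) := by
    intro u; rw [expLoss, hmv]
  set D : ℝ := (1 / (m : ℝ)) * ∑ i, Real.exp (-(s * a i)) * -a i with hD
  have hder : HasDerivAt (fun u : ℝ => expLoss M (u • v)) D s := by
    have hfun : (fun u : ℝ => expLoss M (u • v)) =
        fun u => (1 / (m : ℝ)) * ∑ i, Real.exp (-(u * a i)) := funext hgl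
    rw [hfun, hD]
    apply HasDerivAt.const_mul
    apply HasDerivAt.fun_sum
    intro i _
    have h2 : HasDerivAt (fun u : ℝ => -(u * a i)) (-a i) s := by
      simpa using ((hasDerivAt_id s).mul_const (a i)).fun_neg
    exact h2.exp
  have hminon : IsMinOn (fun u : ℝ => expLoss M (u • v)) (Set.Icc (0:ℝ) 1) s := by
    intro x hx
    exact hmin x hx
  have hcone : (0:ℝ) - s ∈ posTangentConeAt (Set.Icc (0:ℝ) 1) s := by
    apply sub_mem_posTangentConeAt_of_segment_subset
    exact (convex_Icc (0:ℝ) 1).segment_subset hs (Set.mem_Icc.mpr ⟨le_refl 0, zero_le_one⟩)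
  have hkey := hminon.localize.hasFDerivWithinAt_nonneg
    (hder.hasFDerivAt.hasFDerivWithinAt) hcone
  rw [ContinuousLinearMap.toSpanSingleton_apply,
    smul_eq_mul] at hkey
  -- hkey : 0 ≤ (0 - s) * D
  set S : ℝ := ∑ i, Real.exp (-(s * a i)) * a i with hS
  have hDS : (0 - s) * D = s * S / m := by
    rw [hD, hS]
    rw [show (∑ i, Real.exp (-(s * a i)) * -a i) = -∑ i, Real.exp (-(s * a i)) * a i by
      rw [← Finset.sum_neg_distrib]; apply Finset.sum_congr rfl; intros; ring]
    field_simp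
    ring
  rw [hDS] at hkey
  have hsS : 0 ≤ s * S := by
    have := mul_nonneg hkey hm'.le
    rwa [div_mul_cancel₀ _ (ne_of_gt hm')] at this
  have : ∑ i, Real.exp (-(M.mulVec (s • v) i)) * M.mulVec (s • v) i = s * S := by
    rw [hmv, hS, Finset.mul_sum]
    apply Finset.sum_congr rfl; intros; ring
  rw [this]
  exact hsS

end AdaAux


private lemma adaAux_rate (c ε : ℝ) (hc : 0 < c) (hε : 0 < ε) (e : ℕ → ℝ)
    (hrec : ∀ u, 0 < e u → c * e (u + 1) ≤ c * e u - e u ^ 2)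
    (hmono : ∀ u, e (u + 1) ≤ e u) :
    ∀ u : ℕ, (∀ v ≤ u, ε < e v) → (u : ℝ) / c ≤ 1 / e u := by
  intro u
  induction u with
  | zero =>
    intro hb
    have h0 : 0 < e 0 := hε.trans (hb 0 le_rfl)
    simpa using div_nonneg zero_le_one h0.le
  | succ u ih =>
    intro hb
    have hbu : ∀ v ≤ u, ε < e v := fun v hv => hb v (hv.trans (Nat.le_succ u))
    have ihu := ih hbu
    have ha : 0 < e u := hε.trans (hbu u le_rfl)
    have hbpos : 0 < e (u + 1) := hε.trans (hb (u + 1) le_rfl)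
    have hab : e (u + 1) ≤ e u := hmono u
    have hr := hrec u ha
    have key : 1 / e u + 1 / c ≤ 1 / e (u + 1) := by
      rw [div_add_div _ _ (ne_of_gt ha) (ne_of_gt hc),
        div_le_div_iff₀ (by positivity) hbpos]
      nlinarith [mul_le_mul_of_nonneg_left hab ha.le]
    push_cast
    calc ((u : ℝ) + 1) / c = (u : ℝ) / c + 1 / c := by ring
      _ ≤ 1 / e u + 1 / c := by linarith
      _ ≤ 1 / e (u + 1) := key

set_option maxHeartbeats 1600000 in
/-- For any `λ*` and `ε > 0`, AdaBoost.S achieves loss at most `L(λ*) + ε`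
within `3·‖λ*‖₁²/ε` rounds. -/
theorem adaboostS_rate {m N : ℕ} (hm : 0 < m)
    (M : Matrix (Fin m) (Fin N) ℝ) (hM : ∀ i j, |M i j| ≤ 1)
    (lam : ℕ → Fin N → ℝ) (j : ℕ → Fin N) (r : ℕ → ℝ) (s : ℕ → ℝ)
    (hAda : IsAdaBoostS M lam j r s)
    (hdrop : ∀ t : ℕ,
      expLoss M (lam t + Pi.single (j t) ((1 / 2) * Real.log ((1 + r t) / (1 - r t)))) ≤
        expLoss M (lam t) * Real.sqrt (1 - r t ^ 2))
    (lamStar : Fin N → ℝ) (ε : ℝ) (hε : 0 < ε)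
    (t : ℕ) (ht : 3 * l1 lamStar ^ 2 / ε ≤ (t : ℝ)) :
    expLoss M (lam t) ≤ expLoss M lamStar + ε := by
  classical
  obtain ⟨h0, hstep⟩ := hAda
  have hm' : (0:ℝ) < (m : ℝ) := by exact_mod_cast hm
  have hBnn : 0 ≤ l1 lamStar := Finset.sum_nonneg fun _ _ => abs_nonneg _
  have hLpos : ∀ u : ℕ, 0 < expLoss M (lam u) := fun u => adaAux_expLoss_pos hm M (lam u)
  have hL0 : expLoss M (lam 0) = 1 := by rw [h0]; exact adaAux_expLoss_zero hm M
  -- |r u| ≤ 1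
  have hr1 : ∀ u : ℕ, |r u| ≤ 1 := by
    intro u
    obtain ⟨_, hrdef, _, _, _⟩ := hstep u
    have hZp := adaAux_Zpos hm M (lam u)
    have hwt_nonneg : ∀ i, 0 ≤ wt M (lam u) i :=
      fun i => div_nonneg (Real.exp_pos _).le hZp.le
    have hwt_sum : ∑ i, wt M (lam u) i = 1 := by
      simp only [wt]; rw [← Finset.sum_div]; exact div_self (ne_of_gt hZp)
    calc |r u| = |∑ i, wt M (lam u) i * M i (j u)| := by rw [hrdef]
      _ ≤ ∑ i, |wt M (lam u) i * M i (j u)| := Finset.abs_sum_le_sum_abs _ _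
      _ ≤ ∑ i, wt M (lam u) i := by
          apply Finset.sum_le_sum
          intro i _
          rw [abs_mul, abs_of_nonneg (hwt_nonneg i)]
          calc wt M (lam u) i * |M i (j u)| ≤ wt M (lam u) i * 1 :=
                mul_le_mul_of_nonneg_left (hM i (j u)) (hwt_nonneg i)
            _ = wt M (lam u) i := mul_one _
      _ = 1 := hwt_sum
  -- L is nonincreasing, and bounded by 1
  have hmono : ∀ u : ℕ, expLoss M (lam (u + 1)) ≤ expLoss M (lam u) := by
    intro u
    obtain ⟨_, _, _, hmin, hlam⟩ := hstep u
    have h1 := hmin 1 (Set.mem_Icc.mpr ⟨zero_le_one, le_refl 1⟩)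
    rw [one_smul] at h1
    have h2 := hdrop u
    have h3 : Real.sqrt (1 - r u ^ 2) ≤ 1 :=
      Real.sqrt_le_one.mpr (by nlinarith [sq_abs (r u), hr1 u, abs_nonneg (r u)])
    have e0 : expLoss M (lam (u + 1)) =
        expLoss M (s u • (lam u + Pi.single (j u)
          ((1 / 2) * Real.log ((1 + r u) / (1 - r u))))) := by rw [hlam]
    have h4 : expLoss M (lam u) * Real.sqrt (1 - r u ^ 2) ≤ expLoss M (lam u) * 1 :=
      mul_le_mul_of_nonneg_left h3 (hLpos u).le
    rw [e0]
    linarith [h1, h2, h4]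
  have hmono' : ∀ u v : ℕ, u ≤ v → expLoss M (lam v) ≤ expLoss M (lam u) := by
    intro u v huv
    exact antitone_nat_of_succ_le (f := fun u => expLoss M (lam u)) hmono huv
  have hLle1 : ∀ u : ℕ, expLoss M (lam u) ≤ 1 := by
    intro u
    calc expLoss M (lam u) ≤ expLoss M (lam 0) := hmono' 0 u (Nat.zero_le u)
      _ = 1 := hL0
  -- scaling property
  have hscale : ∀ u : ℕ, 0 ≤ ∑ i, Real.exp (-(M.mulVec (lam u) i)) * M.mulVec (lam u) i := by
    intro u
    cases u with
    | zero => simp [h0, Matrix.mulVec_zero]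
    | succ u =>
      obtain ⟨_, _, hsIcc, hmin, hlam⟩ := hstep u
      rw [hlam]
      exact adaAux_scale hm M _ _ hsIcc hmin
  -- edge bound: L u - L* ≤ L u * |r u| * B
  have hedge : ∀ u : ℕ, expLoss M (lam u) - expLoss M lamStar ≤
      expLoss M (lam u) * |r u| * l1 lamStar := by
    intro u
    obtain ⟨hmax, hrdef, _, _, _⟩ := hstep u
    have hZp := adaAux_Zpos hm M (lam u)
    -- column bound
    have hcol : ∀ j' : Fin N, |∑ i, Real.exp (-(M.mulVec (lam u) i)) * M i j'| ≤
        (∑ i, Real.exp (-(M.mulVec (lam u) i))) * |r u| := by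
      intro j'
      have h1 : ∀ j'' : Fin N, ∑ i, wt M (lam u) i * M i j'' =
          (∑ i, Real.exp (-(M.mulVec (lam u) i)) * M i j'') /
            ∑ i, Real.exp (-(M.mulVec (lam u) i)) := by
        intro j''
        rw [Finset.sum_div]
        apply Finset.sum_congr rfl
        intro i _
        simp only [wt]; ring
      have h2 := hmax j'
      rw [← hrdef, h1 j', abs_div, abs_of_pos hZp] at h2
      calc |∑ i, Real.exp (-(M.mulVec (lam u) i)) * M i j'| =
            (|∑ i, Real.exp (-(M.mulVec (lam u) i)) * M i j'| /
              (∑ i, Real.exp (-(M.mulVec (lam u) i)))) *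
              (∑ i, Real.exp (-(M.mulVec (lam u) i))) :=
            (div_mul_cancel₀ _ (ne_of_gt hZp)).symm
        _ ≤ |r u| * (∑ i, Real.exp (-(M.mulVec (lam u) i))) :=
            mul_le_mul_of_nonneg_right h2 hZp.le
        _ = (∑ i, Real.exp (-(M.mulVec (lam u) i))) * |r u| := mul_comm _ _
    -- bound on ∑ exp(-b) b*
    have hstar : ∑ i, Real.exp (-(M.mulVec (lam u) i)) * M.mulVec lamStar i ≤
        (∑ i, Real.exp (-(M.mulVec (lam u) i))) * |r u| * l1 lamStar := by
      have swap : ∑ i, Real.exp (-(M.mulVec (lam u) i)) * M.mulVec lamStar i =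
          ∑ j', (∑ i, Real.exp (-(M.mulVec (lam u) i)) * M i j') * lamStar j' := by
        calc ∑ i, Real.exp (-(M.mulVec (lam u) i)) * M.mulVec lamStar i =
              ∑ i, ∑ j', Real.exp (-(M.mulVec (lam u) i)) * M i j' * lamStar j' := by
              apply Finset.sum_congr rfl
              intro i _
              have hmv : M.mulVec lamStar i = ∑ j', M i j' * lamStar j' := rfl
              rw [hmv, Finset.mul_sum]
              apply Finset.sum_congr rfl
              intro j' _
              ring
          _ = ∑ j', ∑ i, Real.exp (-(M.mulVec (lam u) i)) * M i j' * lamStar j' :=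
              Finset.sum_comm
          _ = ∑ j', (∑ i, Real.exp (-(M.mulVec (lam u) i)) * M i j') * lamStar j' := by
              apply Finset.sum_congr rfl
              intro j' _
              rw [Finset.sum_mul]
      rw [swap, l1, Finset.mul_sum]
      apply Finset.sum_le_sum
      intro j' _
      calc (∑ i, Real.exp (-(M.mulVec (lam u) i)) * M i j') * lamStar j' ≤
            |(∑ i, Real.exp (-(M.mulVec (lam u) i)) * M i j') * lamStar j'| := le_abs_self _
        _ = |∑ i, Real.exp (-(M.mulVec (lam u) i)) * M i j'| * |lamStar j'| := abs_mul _ _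
        _ ≤ (∑ i, Real.exp (-(M.mulVec (lam u) i))) * |r u| * |lamStar j'| :=
            mul_le_mul_of_nonneg_right (hcol j') (abs_nonneg _)
    have hconv := adaAux_conv M (lam u) lamStar
    have hsc := hscale u
    have hsplit : ∑ i, Real.exp (-(M.mulVec (lam u) i)) * (M.mulVec (lam u) i - M.mulVec lamStar i) =
        (∑ i, Real.exp (-(M.mulVec (lam u) i)) * M.mulVec (lam u) i) -
          ∑ i, Real.exp (-(M.mulVec (lam u) i)) * M.mulVec lamStar i := by
      rw [← Finset.sum_sub_distrib]
      apply Finset.sum_congr rfl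
      intros
      ring
    rw [hsplit] at hconv
    -- so m * L* ≥ Z - Z |r| B with Z = m * L u
    have hcastu := adaAux_cast hm M (lam u)
    have hcasts := adaAux_cast hm M lamStar
    have hfin : (m : ℝ) * expLoss M (lam u) - (m : ℝ) * expLoss M (lam u) * |r u| * l1 lamStar ≤
        (m : ℝ) * expLoss M lamStar := by
      rw [hcastu, hcasts]
      linarith [hstar, hconv, hsc]
    nlinarith [hfin, hm']
  -- per-round inequality
  have hrec : ∀ u : ℕ, expLoss M (lam (u + 1)) ≤
      expLoss M (lam u) - expLoss M (lam u) * r u ^ 2 / 2 := by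
    intro u
    obtain ⟨_, _, _, hmin, hlam⟩ := hstep u
    have h1 := hmin 1 (Set.mem_Icc.mpr ⟨zero_le_one, le_refl 1⟩)
    rw [one_smul] at h1
    have h2 := hdrop u
    have hx : 0 ≤ 1 - r u ^ 2 := by nlinarith [sq_abs (r u), hr1 u, abs_nonneg (r u)]
    have hs2 : Real.sqrt (1 - r u ^ 2) ≤ 1 - r u ^ 2 / 2 := by
      nlinarith [Real.sq_sqrt hx, Real.sqrt_nonneg (1 - r u ^ 2), sq_nonneg (r u ^ 2)]
    have e0 : expLoss M (lam (u + 1)) =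
        expLoss M (s u • (lam u + Pi.single (j u)
          ((1 / 2) * Real.log ((1 + r u) / (1 - r u))))) := by rw [hlam]
    have h4 : expLoss M (lam u) * Real.sqrt (1 - r u ^ 2) ≤
        expLoss M (lam u) * (1 - r u ^ 2 / 2) :=
      mul_le_mul_of_nonneg_left hs2 (hLpos u).le
    rw [e0]
    nlinarith [h1, h2, h4]
  -- final argument
  by_cases hB0 : l1 lamStar = 0
  · have hstar0 : lamStar = 0 := by
      funext j'
      have hle : |lamStar j'| ≤ 0 := by
        rw [← hB0, l1]
        exact Finset.single_le_sum (f := fun j'' => |lamStar j''|)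
          (fun _ _ => abs_nonneg _) (Finset.mem_univ j')
      have : |lamStar j'| = 0 := le_antisymm hle (abs_nonneg _)
      simpa using this
    rw [hstar0, adaAux_expLoss_zero hm M]
    linarith [hLle1 t]
  · have hBpos : 0 < l1 lamStar := lt_of_le_of_ne hBnn (Ne.symm hB0)
    have hcpos : 0 < 2 * l1 lamStar ^ 2 := by positivity
    by_cases hbig : ∀ u ≤ t, ε < expLoss M (lam u) - expLoss M lamStar
    · exfalso
      have hrec2 : ∀ u : ℕ, 0 < expLoss M (lam u) - expLoss M lamStar →
          2 * l1 lamStar ^ 2 * (expLoss M (lam (u + 1)) - expLoss M lamStar) ≤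
            2 * l1 lamStar ^ 2 * (expLoss M (lam u) - expLoss M lamStar) -
              (expLoss M (lam u) - expLoss M lamStar) ^ 2 := by
        intro u hEpos
        have h1 := hedge u
        have h2 := hrec u
        have h3 := hLle1 u
        have h4 := (hLpos u).le
        have h5 : (expLoss M (lam u) - expLoss M lamStar) ^ 2 ≤
            (expLoss M (lam u) * |r u| * l1 lamStar) ^ 2 := by
          apply sq_le_sq' _ h1
          nlinarith [mul_nonneg (mul_nonneg h4 (abs_nonneg (r u))) hBnn]
        have h6 : (expLoss M (lam u) * |r u| * l1 lamStar) ^ 2 =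
            expLoss M (lam u) ^ 2 * r u ^ 2 * l1 lamStar ^ 2 := by
          rw [mul_pow, mul_pow, sq_abs]
        have h7 : (expLoss M (lam u) - expLoss M lamStar) ^ 2 ≤
            expLoss M (lam u) * r u ^ 2 * l1 lamStar ^ 2 := by
          nlinarith [h5, h6,
            mul_nonneg (mul_nonneg (mul_nonneg h4 (sq_nonneg (r u))) (sq_nonneg (l1 lamStar)))
              (by linarith : (0:ℝ) ≤ 1 - expLoss M (lam u))]
        nlinarith [h7, mul_le_mul_of_nonneg_left h2
          (by positivity : (0:ℝ) ≤ 2 * l1 lamStar ^ 2)]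
      have hkey := adaAux_rate (2 * l1 lamStar ^ 2) ε hcpos hε
        (fun u => expLoss M (lam u) - expLoss M lamStar)
        hrec2 (fun u => by simpa using sub_le_sub_right (hmono u) (expLoss M lamStar)) t hbig
      have hEt := hbig t le_rfl
      have hEtpos : 0 < expLoss M (lam t) - expLoss M lamStar := hε.trans hEt
      have h7 : 1 / (expLoss M (lam t) - expLoss M lamStar) < 1 / ε :=
        one_div_lt_one_div_of_lt hε hEt
      have h8 : (3 * l1 lamStar ^ 2 / ε) / (2 * l1 lamStar ^ 2) ≤
          (t : ℝ) / (2 * l1 lamStar ^ 2) := by gcongr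
      have h9 : (3 * l1 lamStar ^ 2 / ε) / (2 * l1 lamStar ^ 2) = 3 / (2 * ε) := by
        field_simp
      rw [h9] at h8
      have hkey' : (t : ℝ) / (2 * l1 lamStar ^ 2) ≤
          1 / (expLoss M (lam t) - expLoss M lamStar) := hkey
      have hfin : 3 / (2 * ε) < 1 / ε := lt_of_le_of_lt (h8.trans hkey') h7
      rw [div_lt_div_iff₀ (by positivity) hε] at hfin
      linarith
    · push_neg at hbig
      obtain ⟨u, hu, hEu⟩ := hbig
      linarith [hmono' u t hu]
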